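/- Let γ : 𝕋 → M be a rectifiable curve (Lipschitz, parameterized by arc length, of total length ℓ(γ)) and let v, r ∈ [0,1] be fixed. Then the telescoping sum Σ_{I′ dyadic} δ_d(γ∘ψ^{v,r}(I′)) over all dyadic intervals I′ ⊆ [0,1] is at most 2·ℓ(γ), where δ_d of an interval [a,b] under ψ^{v,r}(t) = v+rt mod 1 is δ₁ applied to the images under γ of the two endpoints and the midpoint. -/

import Mathlib

open ENNReal NNReal

private lemma sum_range_two_mul' (f : ℕ → ℝ) (n : ℕ) :
    ∑ k ∈ Finset.range (2 * n), f k
      = ∑ j ∈ Finset.range n, (f (2 * j) + f (2 * j + 1)) := by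
  induction n with
  | zero => simp
  | succ n ih =>
    have h : 2 * (n + 1) = (2 * n) + 1 + 1 := by ring
    rw [h, Finset.sum_range_succ, Finset.sum_range_succ, ih, Finset.sum_range_succ]
    ring

/-- Telescoping bound: for a `1`-periodic `ℓ`-Lipschitz curve `γ : ℝ → M` (a rectifiable
curve on the circle of length `ℓ`) and fixed `v, r ∈ [0,1]`, the sum of `δ_d(γ∘ψ^{v,r}(I'))`
over all dyadic intervals `I' ⊆ [0,1]` is at most `2ℓ`. -/
theorem sum_delta_d_le_two_length {M : Type*} [MetricSpace M] (γ : ℝ → M)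
    (hper : ∀ x, γ (x + 1) = γ x) (ℓ : ℝ≥0) (hlip : LipschitzWith ℓ γ)
    (v r : ℝ) (hv : v ∈ Set.Icc (0 : ℝ) 1) (hr : r ∈ Set.Icc (0 : ℝ) 1) :
    ∑' p : {p : ℕ × ℕ // p.2 < 2 ^ p.1},
        ENNReal.ofReal
          (dist (γ (v + r * ((p.1.2 : ℝ) / 2 ^ p.1.1)))
              (γ (v + r * (((p.1.2 : ℝ) + 1 / 2) / 2 ^ p.1.1))) +
            dist (γ (v + r * (((p.1.2 : ℝ) + 1 / 2) / 2 ^ p.1.1)))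
              (γ (v + r * (((p.1.2 : ℝ) + 1) / 2 ^ p.1.1))) -
            dist (γ (v + r * ((p.1.2 : ℝ) / 2 ^ p.1.1)))
              (γ (v + r * (((p.1.2 : ℝ) + 1) / 2 ^ p.1.1)))) ≤
      2 * (ℓ : ℝ≥0∞) := by
  classical
  obtain ⟨hr0, hr1⟩ := hr
  -- The real-valued "defect" of a dyadic interval
  set D : ℕ → ℕ → ℝ := fun n k =>
    dist (γ (v + r * ((k : ℝ) / 2 ^ n))) (γ (v + r * (((k : ℝ) + 1 / 2) / 2 ^ n))) +
      dist (γ (v + r * (((k : ℝ) + 1 / 2) / 2 ^ n))) (γ (v + r * (((k : ℝ) + 1) / 2 ^ n))) -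
      dist (γ (v + r * ((k : ℝ) / 2 ^ n))) (γ (v + r * (((k : ℝ) + 1) / 2 ^ n))) with hDdef
  have hDnonneg : ∀ n k, 0 ≤ D n k := by
    intro n k
    have := dist_triangle (γ (v + r * ((k : ℝ) / 2 ^ n)))
      (γ (v + r * (((k : ℝ) + 1 / 2) / 2 ^ n))) (γ (v + r * (((k : ℝ) + 1) / 2 ^ n)))
    simp only [hDdef]
    linarith
  -- The inscribed polygonal length at generation n
  set S : ℕ → ℝ := fun n => ∑ k ∈ Finset.range (2 ^ n),
    dist (γ (v + r * ((k : ℝ) / 2 ^ n))) (γ (v + r * (((k : ℝ) + 1) / 2 ^ n))) with hSdef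
  have htel : ∀ n, ∑ k ∈ Finset.range (2 ^ n), D n k = S (n + 1) - S n := by
    intro n
    have h2 : (2 : ℕ) ^ (n + 1) = 2 * 2 ^ n := by ring
    have hS1 : S (n + 1) = ∑ j ∈ Finset.range (2 ^ n),
        (dist (γ (v + r * ((j : ℝ) / 2 ^ n))) (γ (v + r * (((j : ℝ) + 1 / 2) / 2 ^ n))) +
          dist (γ (v + r * (((j : ℝ) + 1 / 2) / 2 ^ n))) (γ (v + r * (((j : ℝ) + 1) / 2 ^ n)))) := by
      simp only [hSdef]
      rw [h2, sum_range_two_mul']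
      refine Finset.sum_congr rfl fun j _ => ?_
      have e1 : ((2 * j : ℕ) : ℝ) / 2 ^ (n + 1) = (j : ℝ) / 2 ^ n := by
        push_cast; rw [pow_succ]; ring
      have e2 : (((2 * j : ℕ) : ℝ) + 1) / 2 ^ (n + 1) = ((j : ℝ) + 1 / 2) / 2 ^ n := by
        push_cast; rw [pow_succ]; ring
      have e3 : (((2 * j + 1 : ℕ) : ℝ)) / 2 ^ (n + 1) = ((j : ℝ) + 1 / 2) / 2 ^ n := by
        push_cast; rw [pow_succ]; ring
      have e4 : (((2 * j + 1 : ℕ) : ℝ) + 1) / 2 ^ (n + 1) = ((j : ℝ) + 1) / 2 ^ n := by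
        push_cast; rw [pow_succ]; ring
      rw [e1, e2, e3, e4]
    rw [hS1, ← Finset.sum_sub_distrib]
  -- bound on the polygonal length
  have hSle : ∀ n, S n ≤ (ℓ : ℝ) := by
    intro n
    have hstep : ∀ k : ℕ,
        dist (γ (v + r * ((k : ℝ) / 2 ^ n))) (γ (v + r * (((k : ℝ) + 1) / 2 ^ n)))
          ≤ (ℓ : ℝ) * (r / 2 ^ n) := by
      intro k
      have h := hlip.dist_le_mul (v + r * ((k : ℝ) / 2 ^ n)) (v + r * (((k : ℝ) + 1) / 2 ^ n))
      have hd : dist (v + r * ((k : ℝ) / 2 ^ n)) (v + r * (((k : ℝ) + 1) / 2 ^ n))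
          = r / 2 ^ n := by
        rw [Real.dist_eq]
        have : v + r * ((k : ℝ) / 2 ^ n) - (v + r * (((k : ℝ) + 1) / 2 ^ n)) = -(r / 2 ^ n) := by
          ring
        rw [this, abs_neg, abs_of_nonneg (by positivity)]
      rw [hd] at h
      exact h
    calc S n ≤ ∑ k ∈ Finset.range (2 ^ n), (ℓ : ℝ) * (r / 2 ^ n) :=
          Finset.sum_le_sum fun k _ => hstep k
      _ = (ℓ : ℝ) * r := by
          rw [Finset.sum_const, Finset.card_range, nsmul_eq_mul]
          push_cast
          field_simp
      _ ≤ (ℓ : ℝ) * 1 := by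
          exact mul_le_mul_of_nonneg_left hr1 ℓ.coe_nonneg
      _ = (ℓ : ℝ) := mul_one _
  have hS0 : 0 ≤ S 0 := Finset.sum_nonneg fun _ _ => dist_nonneg
  have hdouble : ∀ N : ℕ, ∑ n ∈ Finset.range N, ∑ k ∈ Finset.range (2 ^ n), D n k ≤ (ℓ : ℝ) := by
    intro N
    have : ∑ n ∈ Finset.range N, ∑ k ∈ Finset.range (2 ^ n), D n k = S N - S 0 := by
      rw [← Finset.sum_range_sub S N]
      exact Finset.sum_congr rfl fun n _ => htel n
    rw [this]
    have := hSle N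
    linarith
  -- Now pass to the tsum
  rw [ENNReal.tsum_eq_iSup_sum]
  refine iSup_le fun s => ?_
  set N := (s.sup fun p => p.1.1) + 1 with hN
  set e : {p : ℕ × ℕ // p.2 < 2 ^ p.1} → (Σ _ : ℕ, ℕ) :=
    fun p => (⟨p.1.1, p.1.2⟩ : Σ _ : ℕ, ℕ) with he
  have key : ∑ p ∈ s, ENNReal.ofReal (D p.1.1 p.1.2)
      ≤ ∑ x ∈ (Finset.range N).sigma (fun n => Finset.range (2 ^ n)),
          ENNReal.ofReal (D x.1 x.2) := by
    have hinj : ∀ p ∈ s, ∀ q ∈ s, e p = e q → p = q := by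
      intro p _ q _ h
      simp only [he, Sigma.mk.inj_iff] at h
      exact Subtype.ext (Prod.ext h.1 (eq_of_heq h.2))
    have himg : ∑ x ∈ s.image e, ENNReal.ofReal (D x.1 x.2)
        = ∑ p ∈ s, ENNReal.ofReal (D p.1.1 p.1.2) :=
      Finset.sum_image hinj
    rw [← himg]
    refine Finset.sum_le_sum_of_subset ?_
    intro x hx
    simp only [Finset.mem_image] at hx
    obtain ⟨p, hp, rfl⟩ := hx
    simp only [Finset.mem_sigma, Finset.mem_range, he]
    exact ⟨Nat.lt_succ_of_le (Finset.le_sup (f := fun p => p.1.1) hp), p.2⟩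
  calc ∑ p ∈ s, ENNReal.ofReal (D p.1.1 p.1.2)
      ≤ ∑ x ∈ (Finset.range N).sigma (fun n => Finset.range (2 ^ n)),
          ENNReal.ofReal (D x.1 x.2) := key
    _ = ∑ n ∈ Finset.range N, ∑ k ∈ Finset.range (2 ^ n), ENNReal.ofReal (D n k) := by
        rw [Finset.sum_sigma]
    _ = ENNReal.ofReal (∑ n ∈ Finset.range N, ∑ k ∈ Finset.range (2 ^ n), D n k) := by
        rw [ENNReal.ofReal_sum_of_nonneg fun n _ =>
          Finset.sum_nonneg fun k _ => hDnonneg n k]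
        exact Finset.sum_congr rfl fun n _ =>
          (ENNReal.ofReal_sum_of_nonneg fun k _ => hDnonneg n k).symm
    _ ≤ ENNReal.ofReal (ℓ : ℝ) := ENNReal.ofReal_le_ofReal (hdouble N)
    _ = (ℓ : ℝ≥0∞) := ENNReal.ofReal_coe_nnreal
    _ ≤ 2 * (ℓ : ℝ≥0∞) := le_mul_of_one_le_left zero_le one_le_two
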